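/- Let (P,R,f) be a DPS instance on a finite simple graph. Then (P,R,f) admits a valid schedule if and only if it admits a valid periodic schedule, i.e., a valid schedule S for which there exists T ≥ 1 with S(t+T) = S(t) for all t ∈ ℕ. -/
import Mathlib


open scoped ENNReal BigOperators

namespace PolySched

variable {V : Type*}

/-- A set of edges is a matching in `G`: all edges belong to `G` and no two
distinct edges share an endpoint. -/
def IsMatchingIn (G : SimpleGraph V) (M : Set (Sym2 V)) : Prop :=
  M ⊆ G.edgeSet ∧ M.Pairwise fun e e' => ∀ v, v ∈ e → v ∉ e'

/-- A schedule is valid for the OPS instance on `G` if each day is a matching. -/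
def OPSValid (G : SimpleGraph V) (S : ℕ → Set (Sym2 V)) : Prop :=
  ∀ t, IsMatchingIn G (S t)

/-- A schedule is valid for the DPS instance `(G, f)`. -/
def DPSValid (G : SimpleGraph V) (f : Sym2 V → ℕ) (S : ℕ → Set (Sym2 V)) : Prop :=
  OPSValid G S ∧ ∀ e ∈ G.edgeSet, ∀ t : ℕ, ∃ i < f e, e ∈ S (t + i)

/-- Recurrence time of edge `e` under schedule `S`: the supremum of `d+1` over
all `d` such that some window of `d` consecutive days misses `e`. -/
noncomputable def recTime (S : ℕ → Set (Sym2 V)) (e : Sym2 V) : ℝ≥0∞ :=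
  ⨆ d ∈ {d : ℕ | ∃ t : ℕ, ∀ i < d, e ∉ S (t + i)}, ((d : ℝ≥0∞) + 1)

/-- Heat of a schedule for the OPS instance `(G, g)`. -/
noncomputable def heat (G : SimpleGraph V) (g : Sym2 V → ℝ) (S : ℕ → Set (Sym2 V)) : ℝ≥0∞ :=
  ⨆ e ∈ G.edgeSet, ENNReal.ofReal (g e) * recTime S e
/-- A DPS instance on a finite graph admits a valid schedule iff
it admits a valid periodic schedule. -/
theorem dps_feasible_iff_periodic {V : Type*} [Fintype V]
    (G : SimpleGraph V) (f : Sym2 V → ℕ) (hf : ∀ e ∈ G.edgeSet, 0 < f e) :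
    (∃ S : ℕ → Set (Sym2 V), DPSValid G f S) ↔
    (∃ S : ℕ → Set (Sym2 V), DPSValid G f S ∧
      ∃ T : ℕ, 1 ≤ T ∧ ∀ t : ℕ, S (t + T) = S t) := by
  constructor
  · rintro ⟨S, hS⟩
    classical
    set F : ℕ := (Finset.univ : Finset (Sym2 V)).sup f + 1 with hF
    have hFe : ∀ e, f e < F := fun e =>
      Nat.lt_succ_of_le (Finset.le_sup (Finset.mem_univ e))
    obtain ⟨a, b, hab, heq⟩ : ∃ a b : ℕ, a < b ∧ ∀ i : Fin F, S (a + i) = S (b + i) := by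
      obtain ⟨x, y, hxy, hmap⟩ := Finite.exists_ne_map_eq_of_infinite
        (fun t : ℕ => fun i : Fin F => S (t + i))
      rcases hxy.lt_or_gt with h | h
      · exact ⟨x, y, h, fun i => congrFun hmap i⟩
      · exact ⟨y, x, h, fun i => (congrFun hmap i).symm⟩
    obtain ⟨T, hT0, hb⟩ : ∃ T, 0 < T ∧ b = a + T := ⟨b - a, by omega, by omega⟩
    have hper : ∀ k, k < F → S (a + k) = S (a + T + k) := by
      intro k hk
      have := heq ⟨k, hk⟩
      simpa [hb] using this
    have hkey : ∀ m, m < T + F → S (a + m % T) = S (a + m) := by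
      intro m
      induction m using Nat.strong_induction_on with
      | _ m ih =>
        intro hm
        rcases lt_or_ge m T with h | h
        · rw [Nat.mod_eq_of_lt h]
        · have h1 : m - T < F := by omega
          have h2 : m % T = (m - T) % T := by
            conv_lhs => rw [← Nat.sub_add_cancel h]
            rw [Nat.add_mod_right]
          calc S (a + m % T) = S (a + (m - T) % T) := by rw [h2]
            _ = S (a + (m - T)) := ih (m - T) (by omega) (by omega)
            _ = S (a + T + (m - T)) := hper _ h1
            _ = S (a + m) := congrArg S (by omega)
    refine ⟨fun t => S (a + t % T), ⟨fun t => hS.1 _, ?_⟩, T, hT0, fun t => by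
      show S (a + (t + T) % T) = S (a + t % T)
      rw [Nat.add_mod_right]⟩
    intro e he t
    obtain ⟨i, hi, hmem⟩ := hS.2 e he (a + t % T)
    refine ⟨i, hi, ?_⟩
    show e ∈ S (a + (t + i) % T)
    have hmod : (t + i) % T = (t % T + i) % T := (Nat.mod_add_mod t T i).symm
    have hlt : t % T + i < T + F :=
      Nat.add_lt_add (Nat.mod_lt _ hT0) (lt_trans hi (hFe e))
    rw [hmod, hkey _ hlt]
    simpa [Nat.add_assoc] using hmem
  · rintro ⟨S, hS, _⟩
    exact ⟨S, hS⟩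

end PolySched
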